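/- Let N ≥ 1, σ₁ > 0, σ₂ > 0, η₂ > 0, and 0 ≤ α < σ₂²/(σ₁² + σ₂²). Let F₁ ∈ ℝ^{N×N} be strictly lower triangular and let F₂ ∈ ℝ^{N×N} be of subdiagonal form whose entry in the last row is zero. Assume that xᵀBx ≥ ασ₁²‖x‖² for all x ∈ ℝ^N (the conjectured lower bound on the smallest eigenvalue of B, noting that min{ασ₁², (1−α)σ₂²} = ασ₁² under the assumption on α). Define g₂* := √η₂·σ₂·e_N. Then for every g₂ ∈ ℝ^N with g₂ᵀQ₂⁻¹g₂ = η₂, the optimality loss satisfies (α‖F₁g₂*‖² + (1−α)‖(I + F₂F₁)g₂*‖²) − (α‖F₁g₂‖² + (1−α)‖(I + F₂F₁)g₂‖²) ≤ η₂(σ₁² + σ₂²)·(σ₂²/(σ₁² + σ₂²) − α). -/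

import Mathlib

open Matrix

noncomputable section

/-- A matrix is strictly lower triangular: `A i j = 0` whenever `i ≤ j`. -/
def Slt {N : ℕ} (A : Matrix (Fin N) (Fin N) ℝ) : Prop :=
  ∀ i j : Fin N, i ≤ j → A i j = 0

/-- A matrix is of subdiagonal form: only entries immediately below the
diagonal may be nonzero. -/
def Subdiag {N : ℕ} (A : Matrix (Fin N) (Fin N) ℝ) : Prop :=
  ∀ i j : Fin N, (i : ℕ) ≠ (j : ℕ) + 1 → A i j = 0

/-- `Q₂ = σ₁²F₂F₂ᵀ + σ₂²I`. -/
def Q2 {N : ℕ} (σ₁ σ₂ : ℝ) (F₂ : Matrix (Fin N) (Fin N) ℝ) :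
    Matrix (Fin N) (Fin N) ℝ :=
  σ₁ ^ 2 • (F₂ * F₂ᵀ) + σ₂ ^ 2 • 1

/-- `B = α·Qs F₁ᵀF₁ Qs + (1−α)·Qs (I + F₂F₁)ᵀ(I + F₂F₁) Qs`. -/
def Bmat {N : ℕ} (α : ℝ) (F₁ F₂ Qs : Matrix (Fin N) (Fin N) ℝ) :
    Matrix (Fin N) (Fin N) ℝ :=
  α • (Qs * F₁ᵀ * F₁ * Qs)
    + (1 - α) • (Qs * (1 + F₂ * F₁)ᵀ * (1 + F₂ * F₁) * Qs)

/-- Auxiliary: quadratic form of `Aᵀ * A`. -/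
lemma dot_transpose_mul_aux {N : ℕ} (A : Matrix (Fin N) (Fin N) ℝ) (x : Fin N → ℝ) :
    x ⬝ᵥ (Aᵀ * A).mulVec x = A.mulVec x ⬝ᵥ A.mulVec x := by
  rw [← Matrix.mulVec_mulVec, Matrix.dotProduct_mulVec, ← Matrix.mulVec_transpose,
    Matrix.transpose_transpose]

/-- (Corollary 1.) Under the conjectured quadratic lower
bound `xᵀBx ≥ ασ₁²‖x‖²` and `0 ≤ α < σ₂²/(σ₁² + σ₂²)`, the optimality loss of
choosing `g₂* = √η₂·σ₂·e_N` is at most `η₂(σ₁² + σ₂²)(σ₂²/(σ₁² + σ₂²) − α)`. -/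
theorem g2_star_optimality_loss {N : ℕ} (hN : 1 ≤ N)
    (σ₁ σ₂ : ℝ) (hσ₁ : 0 < σ₁) (hσ₂ : 0 < σ₂)
    (η₂ : ℝ) (hη₂ : 0 < η₂)
    (α : ℝ) (hα0 : 0 ≤ α) (hα1 : α < σ₂ ^ 2 / (σ₁ ^ 2 + σ₂ ^ 2))
    (F₁ F₂ : Matrix (Fin N) (Fin N) ℝ) (hF₁ : Slt F₁) (hF₂ : Subdiag F₂)
    (hlast : ∀ j : Fin N, F₂ ⟨N - 1, by omega⟩ j = 0)
    (Qs : Matrix (Fin N) (Fin N) ℝ) (hQs : Qs.PosSemidef)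
    (hQsq : Qs * Qs = Q2 σ₁ σ₂ F₂)
    (hB : ∀ x : Fin N → ℝ,
      x ⬝ᵥ (Bmat α F₁ F₂ Qs).mulVec x ≥ α * σ₁ ^ 2 * (x ⬝ᵥ x)) :
    let gstar : Fin N → ℝ :=
      (Real.sqrt η₂ * σ₂) • (Pi.single (⟨N - 1, by omega⟩ : Fin N) 1 : Fin N → ℝ)
    ∀ g₂ : Fin N → ℝ, g₂ ⬝ᵥ (Q2 σ₁ σ₂ F₂)⁻¹.mulVec g₂ = η₂ →
      (α * ((F₁.mulVec gstar) ⬝ᵥ (F₁.mulVec gstar))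
        + (1 - α) * (((1 + F₂ * F₁).mulVec gstar) ⬝ᵥ ((1 + F₂ * F₁).mulVec gstar)))
      - (α * ((F₁.mulVec g₂) ⬝ᵥ (F₁.mulVec g₂))
        + (1 - α) * (((1 + F₂ * F₁).mulVec g₂) ⬝ᵥ ((1 + F₂ * F₁).mulVec g₂)))
      ≤ η₂ * (σ₁ ^ 2 + σ₂ ^ 2) * (σ₂ ^ 2 / (σ₁ ^ 2 + σ₂ ^ 2) - α) := by
  intro gstar g₂ hg₂
  set last : Fin N := ⟨N - 1, by omega⟩ with hlastdef
  set T : Matrix (Fin N) (Fin N) ℝ := 1 + F₂ * F₁ with hT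
  -- F₁ annihilates gstar
  have hF1col : ∀ i : Fin N, F₁ i last = 0 := fun i =>
    hF₁ i last (by
      have hi := i.isLt
      rw [Fin.le_def]
      show (i : ℕ) ≤ N - 1
      omega)
  have hF1g : F₁.mulVec gstar = 0 := by
    funext i
    simp only [gstar, Matrix.mulVec_smul, Pi.smul_apply, smul_eq_mul]
    have : F₁.mulVec (Pi.single last 1) i = 0 := by
      simp [Matrix.mulVec_single, hF1col i]
    rw [this, mul_zero, Pi.zero_apply]
  have hTg : T.mulVec gstar = gstar := by
    rw [hT, Matrix.add_mulVec, Matrix.one_mulVec, ← Matrix.mulVec_mulVec, hF1g,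
      Matrix.mulVec_zero, add_zero]
  have hgg : gstar ⬝ᵥ gstar = η₂ * σ₂ ^ 2 := by
    simp only [gstar, smul_dotProduct, dotProduct_smul, smul_eq_mul]
    have : (Pi.single last (1:ℝ)) ⬝ᵥ (Pi.single last (1:ℝ)) = 1 := by
      simp [dotProduct, Pi.single_apply]
    rw [this]
    have := Real.mul_self_sqrt hη₂.le
    ring_nf
    nlinarith [Real.sq_sqrt hη₂.le]
  -- Q₂ is positive definite
  have hQ2pd : (Q2 σ₁ σ₂ F₂).PosDef := by
    refine Matrix.PosDef.of_dotProduct_mulVec_pos ?_ ?_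
    · show (Q2 σ₁ σ₂ F₂)ᴴ = Q2 σ₁ σ₂ F₂
      simp [Q2, Matrix.conjTranspose_add, Matrix.conjTranspose_smul,
        Matrix.conjTranspose_mul, Matrix.mul_assoc]
    · intro x hx
      have hA : x ⬝ᵥ (F₂ * F₂ᵀ).mulVec x = F₂ᵀ.mulVec x ⬝ᵥ F₂ᵀ.mulVec x := by
        have := dot_transpose_mul_aux F₂ᵀ x
        rwa [Matrix.transpose_transpose] at this
      have hxx : 0 < x ⬝ᵥ x := by
        rcases lt_or_eq_of_le (Finset.sum_nonneg fun i _ => mul_self_nonneg (x i)) with h | h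
        · exact h
        · exact absurd (dotProduct_self_eq_zero.mp h.symm) hx
      have hFF : 0 ≤ F₂ᵀ.mulVec x ⬝ᵥ F₂ᵀ.mulVec x :=
        Finset.sum_nonneg fun i _ => mul_self_nonneg _
      simp only [star_trivial]
      unfold Q2
      rw [Matrix.add_mulVec, dotProduct_add, Matrix.smul_mulVec,
        Matrix.smul_mulVec, Matrix.one_mulVec, dotProduct_smul,
        dotProduct_smul, hA, smul_eq_mul, smul_eq_mul]
      have h1 : 0 ≤ σ₁ ^ 2 * (F₂ᵀ.mulVec x ⬝ᵥ F₂ᵀ.mulVec x) :=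
        mul_nonneg (sq_nonneg _) hFF
      have h2 : 0 < σ₂ ^ 2 * (x ⬝ᵥ x) := mul_pos (pow_pos hσ₂ 2) hxx
      linarith
  have hdetQ2 : (Q2 σ₁ σ₂ F₂).det ≠ 0 := ne_of_gt hQ2pd.det_pos
  have hdetQs : IsUnit Qs.det := by
    rw [isUnit_iff_ne_zero]
    intro h
    apply hdetQ2
    rw [← hQsq, Matrix.det_mul, h, mul_zero]
  have hQssym : Qsᵀ = Qs := hQs.1
  -- the transformed vector
  set y : Fin N → ℝ := Qs⁻¹.mulVec g₂ with hy
  have hgy : Qs.mulVec y = g₂ := by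
    rw [hy, Matrix.mulVec_mulVec, Matrix.mul_nonsing_inv _ hdetQs, Matrix.one_mulVec]
  have hQinv : (Q2 σ₁ σ₂ F₂)⁻¹ = Qs⁻¹ * Qs⁻¹ := by
    rw [← hQsq, Matrix.mul_inv_rev]
  have hQsinvsym : (Qs⁻¹)ᵀ = Qs⁻¹ := by
    rw [Matrix.transpose_nonsing_inv, hQssym]
  have hyy : y ⬝ᵥ y = η₂ := by
    have : g₂ ⬝ᵥ (Qs⁻¹ * Qs⁻¹).mulVec g₂ = y ⬝ᵥ y := by
      have := dot_transpose_mul_aux Qs⁻¹ g₂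
      rw [hQsinvsym] at this
      rw [this, hy]
    rw [hQinv, this] at hg₂
    exact hg₂
  -- quadratic form identities
  have hq1 : y ⬝ᵥ (Qs * F₁ᵀ * F₁ * Qs).mulVec y = F₁.mulVec g₂ ⬝ᵥ F₁.mulVec g₂ := by
    have key : Qs * F₁ᵀ * F₁ * Qs = (F₁ * Qs)ᵀ * (F₁ * Qs) := by
      rw [Matrix.transpose_mul, hQssym]; exact mul_assoc (Qs * F₁ᵀ) F₁ Qs
    rw [key, dot_transpose_mul_aux, ← Matrix.mulVec_mulVec, hgy]
  have hq2 : y ⬝ᵥ (Qs * Tᵀ * T * Qs).mulVec y = T.mulVec g₂ ⬝ᵥ T.mulVec g₂ := by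
    have key : Qs * Tᵀ * T * Qs = (T * Qs)ᵀ * (T * Qs) := by
      rw [Matrix.transpose_mul, hQssym]; exact mul_assoc (Qs * Tᵀ) T Qs
    rw [key, dot_transpose_mul_aux, ← Matrix.mulVec_mulVec, hgy]
  -- lower bound on the objective at g₂
  have hobj : α * (F₁.mulVec g₂ ⬝ᵥ F₁.mulVec g₂)
      + (1 - α) * (T.mulVec g₂ ⬝ᵥ T.mulVec g₂) ≥ α * σ₁ ^ 2 * η₂ := by
    have := hB y
    rw [Bmat, Matrix.add_mulVec, dotProduct_add, Matrix.smul_mulVec,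
      Matrix.smul_mulVec, dotProduct_smul, dotProduct_smul,
      smul_eq_mul, smul_eq_mul, hq1, ← hT, hq2, hyy] at this
    exact this
  -- objective at gstar
  have hFg : F₁.mulVec gstar ⬝ᵥ F₁.mulVec gstar = 0 := by rw [hF1g]; simp
  have hTgd : T.mulVec gstar ⬝ᵥ T.mulVec gstar = η₂ * σ₂ ^ 2 := by rw [hTg, hgg]
  have hsum : σ₁ ^ 2 + σ₂ ^ 2 > 0 := by positivity
  have hrhs : η₂ * (σ₁ ^ 2 + σ₂ ^ 2) * (σ₂ ^ 2 / (σ₁ ^ 2 + σ₂ ^ 2) - α)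
      = (1 - α) * (η₂ * σ₂ ^ 2) - α * σ₁ ^ 2 * η₂ := by
    field_simp
    ring
  rw [hFg, hTgd, hrhs]
  linarith [hobj]

end
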